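/- Let C be a triangulated category and T a contravariantly finite rigid full subcategory. Then a morphism f : X → Y in C satisfies C(T', f) = 0 for all T' in T (i.e., for every T' in T and every morphism u : T' → X, f∘u = 0) if and only if f factors through some object of T^⊥. -/

import Mathlib

open CategoryTheory CategoryTheory.Limits CategoryTheory.Pretriangulated

variable {C : Type*} [Category C] [Preadditive C] [HasZeroObject C]
  [HasShift C ℤ] [∀ n : ℤ, Functor.Additive (CategoryTheory.shiftFunctor C n)]
  [Pretriangulated C]

/-- `f` factors through an object of the set `S`. -/
def FactorsThruSet (S : Set C) {X Y : C} (f : X ⟶ Y) : Prop :=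
  ∃ U ∈ S, ∃ (a : X ⟶ U) (b : U ⟶ Y), f = a ≫ b

/-- The right perpendicular subcategory `T^⊥` of a full subcategory `T`. -/
def rperp (T : Set C) : Set C := {Z | ∀ T' ∈ T, ∀ (f : T' ⟶ Z), f = 0}

/-- The class `W` of morphisms whose connecting morphisms in any triangle factor
through `T^⊥`. -/
def Wclass (T : Set C) {X Y : C} (f : X ⟶ Y) : Prop :=
  ∀ (Z : C) (r : Z ⟶ X) (s : Y ⟶ Z⟦(1:ℤ)⟧),
    (Triangle.mk r f s ∈ distTriang C) →
      FactorsThruSet (rperp T) r ∧ FactorsThruSet (rperp T) s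

/-- A subcategory `T` is rigid if `C(T, ΣT) = 0`. -/
def IsRigid (T : Set C) : Prop :=
  ∀ T' ∈ T, ∀ T'' ∈ T, ∀ (f : T' ⟶ (T'' : C)⟦(1:ℤ)⟧), f = 0

/-- A subcategory is contravariantly finite if every object admits a right approximation. -/
def ContravariantlyFinite (T : Set C) : Prop :=
  ∀ X : C, ∃ T₀ ∈ T, ∃ (p : T₀ ⟶ X), ∀ T' ∈ T, ∀ (u : T' ⟶ X), ∃ v : T' ⟶ T₀, v ≫ p = u
/-- A morphism `f` is killed by `C(T', -)` for all `T'` in `T` if and only if it factors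
through an object of `T^⊥`. -/
theorem factors_through_perp_iff (T : Set C)
    (hcf : ContravariantlyFinite T) (hrig : IsRigid T)
    {X Y : C} (f : X ⟶ Y) :
    (∀ T' ∈ T, ∀ (u : T' ⟶ X), u ≫ f = 0) ↔ FactorsThruSet (rperp T) f := by

  constructor
  · intro hf
    obtain ⟨T₀, hT₀, p, hp⟩ := hcf X
    obtain ⟨X', g, h, mem⟩ := Pretriangulated.distinguished_cocone_triangle p
    have hX' : X' ∈ rperp T := by
      intro T' hT' u
      have hrig' : u ≫ (Triangle.mk p g h).mor₃ = 0 :=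
        hrig T' hT' T₀ hT₀ _
      obtain ⟨v, hv⟩ := Triangle.coyoneda_exact₃ _ mem u hrig'
      obtain ⟨w, hw⟩ := hp T' hT' v
      have : (Triangle.mk p g h).mor₁ ≫ (Triangle.mk p g h).mor₂ = 0 :=
        Pretriangulated.comp_distTriang_mor_zero₁₂ _ mem
      rw [hv, ← hw]
      exact (Category.assoc w p _).trans ((congrArg (w ≫ ·) this).trans comp_zero)
    obtain ⟨b, hb⟩ := Triangle.yoneda_exact₂ _ mem f (hf T₀ hT₀ p)
    exact ⟨X', hX', g, b, hb⟩
  · rintro ⟨U, hU, a, b, rfl⟩ T' hT' u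
    rw [← Category.assoc, hU T' hT' (u ≫ a), zero_comp]
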